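/- Minimize L(N, D, ρ) = A·N^{−α} + B·D^{−β}·ρ^{−ν} + E + κ(1−ρ)^μ over N, D > 0 subject to the compute constraint C = 6ND, for fixed C and ρ. The minimizer satisfies N*(C, ρ) = N*(C, 1)·ρ^{ν/(α+β)} and D*(C, ρ) = D*(C, 1)·ρ^{−ν/(α+β)}, where N*(C,1), D*(C,1) denote the optimal allocation at ρ = 1. -/

import Mathlib

open Real

/-- The Information-Resolution Scaling Law. -/
noncomputable def infoResLoss (A B E α β ν κ μ : ℝ) (N D ρ : ℝ) : ℝ :=
  A * N ^ (-α) + B * D ^ (-β) * ρ ^ (-ν) + E + κ * (1 - ρ) ^ μ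

/-- Any positive minimizer of `N ↦ a·N^(−α) + k·N^β` satisfies the first-order
condition, giving `N₀^(α+β) = α·a/(β·k)`. -/
lemma crit_point_eq (a k α β N0 : ℝ) (ha : 0 < a) (hk : 0 < k) (hα : 0 < α) (hβ : 0 < β)
    (hN0 : 0 < N0)
    (hmin : ∀ N : ℝ, 0 < N → a * N0 ^ (-α) + k * N0 ^ β ≤ a * N ^ (-α) + k * N ^ β) :
    N0 ^ (α + β) = α * a / (β * k) := by
  have hd : HasDerivAt (fun N : ℝ => a * N ^ (-α) + k * N ^ β)
      (a * (-α * N0 ^ (-α - 1)) + k * (β * N0 ^ (β - 1))) N0 :=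
    ((Real.hasDerivAt_rpow_const (Or.inl hN0.ne')).const_mul a).add
      ((Real.hasDerivAt_rpow_const (Or.inl hN0.ne')).const_mul k)
  have hloc : IsLocalMin (fun N : ℝ => a * N ^ (-α) + k * N ^ β) N0 := by
    filter_upwards [Ioi_mem_nhds hN0] with N hN using hmin N hN
  have h0 := hloc.hasDerivAt_eq_zero hd
  have h1 : k * β * N0 ^ (β - 1) = a * α * N0 ^ (-α - 1) := by nlinarith [h0]
  have hpow : N0 ^ (α + β) = N0 ^ (β - 1) / N0 ^ (-α - 1) := by
    rw [← Real.rpow_sub hN0]; ring_nf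
  have hp1 : (0:ℝ) < N0 ^ (-α - 1) := Real.rpow_pos_of_pos hN0 _
  rw [hpow]
  field_simp
  nlinarith [h1]

/-- Under the compute constraint C = 6ND, the minimizer of the
info-resolution law at resolution ρ relates to the clean-data (ρ = 1) optimum by
N*(C,ρ) = N*(C,1)·ρ^{ν/(α+β)} and D*(C,ρ) = D*(C,1)·ρ^{−ν/(α+β)}. -/
theorem compute_optimal_allocation
    (A B E α β ν κ μ C ρ : ℝ)
    (hA : 0 < A) (hB : 0 < B) (hE : 0 < E) (hα : 0 < α) (hβ : 0 < β)
    (hν : 0 < ν) (hκ : 0 < κ) (hμ : 0 < μ) (hμ1 : μ ≤ 1)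
    (hC : 0 < C) (hρ : ρ ∈ Set.Ioc (0:ℝ) 1)
    (N1 D1 Nρ Dρ : ℝ)
    (hN1 : 0 < N1) (hD1 : 0 < D1) (hNρ : 0 < Nρ) (hDρ : 0 < Dρ)
    (hc1 : C = 6 * N1 * D1) (hcρ : C = 6 * Nρ * Dρ)
    (hmin1 : ∀ N D : ℝ, 0 < N → 0 < D → C = 6 * N * D →
      infoResLoss A B E α β ν κ μ N1 D1 1 ≤ infoResLoss A B E α β ν κ μ N D 1)
    (hminρ : ∀ N D : ℝ, 0 < N → 0 < D → C = 6 * N * D →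
      infoResLoss A B E α β ν κ μ Nρ Dρ ρ ≤ infoResLoss A B E α β ν κ μ N D ρ) :
    Nρ = N1 * ρ ^ (ν / (α + β)) ∧ Dρ = D1 * ρ ^ (-(ν / (α + β))) := by
  obtain ⟨hρ0, hρ1⟩ := hρ
  set K : ℝ := B * (C / 6) ^ (-β) with hK
  have hKpos : 0 < K := by positivity
  -- rewrite loss along the constraint curve
  have hbase : ∀ N : ℝ, 0 < N → (C / (6 * N)) ^ (-β) = (C / 6) ^ (-β) * N ^ β := by
    intro N hN
    have h1 : C / (6 * N) = (C / 6) * N⁻¹ := by field_simp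
    rw [h1, Real.mul_rpow (by positivity) (by positivity),
      Real.inv_rpow hN.le, Real.rpow_neg hN.le, inv_inv]
  have hcurve : ∀ r : ℝ, ∀ N : ℝ, 0 < N →
      infoResLoss A B E α β ν κ μ N (C / (6 * N)) r
        = A * N ^ (-α) + (K * r ^ (-ν)) * N ^ β + (E + κ * (1 - r) ^ μ) := by
    intro r N hN
    rw [infoResLoss, hbase N hN, hK]; ring
  have hDcon : ∀ N : ℝ, 0 < N → C = 6 * N * (C / (6 * N)) := by
    intro N hN; field_simp
  have hDρeq : Dρ = C / (6 * Nρ) := by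
    rw [hcρ]; field_simp
  have hD1eq : D1 = C / (6 * N1) := by
    rw [hc1]; field_simp
  -- first-order conditions
  have hfocρ : Nρ ^ (α + β) = α * A / (β * (K * ρ ^ (-ν))) := by
    apply crit_point_eq A (K * ρ ^ (-ν)) α β Nρ hA (by positivity) hα hβ hNρ
    intro N hN
    have := hminρ N (C / (6 * N)) hN (by positivity) (hDcon N hN)
    rw [hDρeq] at this
    rw [hcurve ρ Nρ hNρ, hcurve ρ N hN] at this
    linarith
  have hfoc1 : N1 ^ (α + β) = α * A / (β * (K * (1:ℝ) ^ (-ν))) := by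
    apply crit_point_eq A (K * (1:ℝ) ^ (-ν)) α β N1 hA (by positivity) hα hβ hN1
    intro N hN
    have := hmin1 N (C / (6 * N)) hN (by positivity) (hDcon N hN)
    rw [hD1eq] at this
    rw [hcurve 1 N1 hN1, hcurve 1 N hN] at this
    linarith
  rw [Real.one_rpow, mul_one] at hfoc1
  have hρν : ρ ^ (-ν) = (ρ ^ ν)⁻¹ := Real.rpow_neg hρ0.le ν
  have hρνpos : (0:ℝ) < ρ ^ ν := Real.rpow_pos_of_pos hρ0 ν
  have hrel : Nρ ^ (α + β) = N1 ^ (α + β) * ρ ^ ν := by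
    rw [hfocρ, hfoc1, hρν]
    field_simp
  have hs : (0:ℝ) < α + β := by linarith
  have hNρ_eq : Nρ = N1 * ρ ^ (ν / (α + β)) := by
    have h1 : Nρ = (Nρ ^ (α + β)) ^ (α + β)⁻¹ :=
      (Real.rpow_rpow_inv hNρ.le hs.ne').symm
    rw [h1, hrel, Real.mul_rpow (by positivity) hρνpos.le,
      Real.rpow_rpow_inv hN1.le hs.ne', ← Real.rpow_mul hρ0.le,
      div_eq_mul_inv]
  refine ⟨hNρ_eq, ?_⟩
  have hrp : (0:ℝ) < ρ ^ (ν / (α + β)) := Real.rpow_pos_of_pos hρ0 _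
  rw [hDρeq, hNρ_eq, hD1eq, Real.rpow_neg hρ0.le]
  field_simp
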